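/- If the basic reproduction number R0 = β/(γ+d) satisfies R0 > 1, then the equation d(1-S*) - βI*S* + (γ + νβ(1-S*-I*)) I* exp(-dτ - νβτI*) = 0 with S* = 1/R0 has a unique solution I* in the open interval (0, 1 - S*). -/

import Mathlib

private lemma mono_aux (γ d m τ : ℝ) (hγ : 0 < γ) (hd : 0 < d) (hm : 0 ≤ m) (hτ : 0 < τ) :
    StrictMonoOn (fun x : ℝ => x + γ * x * (1 - Real.exp (-d * τ - m * τ * x)) /
      (d + m * x * Real.exp (-d * τ - m * τ * x))) (Set.Ici 0) := by
  have hPpos : ∀ x : ℝ, 0 ≤ x → 0 < d + m * x * Real.exp (-d * τ - m * τ * x) := by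
    intro x hx
    have h1 : 0 ≤ m * x * Real.exp (-d * τ - m * τ * x) :=
      mul_nonneg (mul_nonneg hm hx) (Real.exp_pos _).le
    linarith
  have hcont : ContinuousOn (fun x : ℝ => x + γ * x * (1 - Real.exp (-d * τ - m * τ * x)) /
      (d + m * x * Real.exp (-d * τ - m * τ * x))) (Set.Ici 0) := by
    apply ContinuousOn.add continuousOn_id
    apply ContinuousOn.div
    · fun_prop
    · fun_prop
    · intro x hx
      exact (hPpos x hx).ne'
  apply strictMonoOn_of_deriv_pos (convex_Ici 0) hcont
  intro x hx
  rw [interior_Ici] at hx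
  have hx0 : 0 < x := hx
  set Ex := Real.exp (-d * τ - m * τ * x) with hEx
  have hEpos : 0 < Ex := Real.exp_pos _
  have hE1 : Ex < 1 := by
    rw [hEx]
    apply Real.exp_lt_one_iff.mpr
    have : 0 ≤ m * τ * x := mul_nonneg (mul_nonneg hm hτ.le) hx0.le
    nlinarith
  have hE : HasDerivAt (fun y : ℝ => Real.exp (-d * τ - m * τ * y)) (-(m * τ) * Ex) x := by
    have h1 : HasDerivAt (fun y : ℝ => -d * τ - m * τ * y) (-(m * τ)) x := by
      simpa using ((hasDerivAt_id x).const_mul (m * τ)).const_sub (-d * τ)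
    simpa [hEx, mul_comm] using h1.exp
  have hN : HasDerivAt (fun y : ℝ => γ * y * (1 - Real.exp (-d * τ - m * τ * y)))
      (γ * (1 - Ex) + γ * x * (m * τ * Ex)) x := by
    have h2 : HasDerivAt (fun y : ℝ => γ * y * (1 - Real.exp (-d * τ - m * τ * y))) _ x :=
      (((hasDerivAt_id x).const_mul γ)).mul ((hasDerivAt_const x 1).sub hE)
    convert h2 using 1
    simp only [Pi.sub_apply, id, ← hEx]
    ring
  have hP : HasDerivAt (fun y : ℝ => d + m * y * Real.exp (-d * τ - m * τ * y))
      (m * Ex + m * x * (-(m * τ) * Ex)) x := by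
    have h2 : HasDerivAt (fun y : ℝ => d + m * y * Real.exp (-d * τ - m * τ * y)) _ x :=
      (hasDerivAt_const x d).add ((((hasDerivAt_id x).const_mul m)).mul hE)
    rw [← hEx] at h2
    convert h2 using 1
    simp only [id]
    ring
  have hPne : (d + m * x * Ex) ≠ 0 := (hPpos x hx0.le).ne'
  have hQ := hN.div hP hPne
  have hH : HasDerivAt (fun y : ℝ => y + γ * y * (1 - Real.exp (-d * τ - m * τ * y)) /
      (d + m * y * Real.exp (-d * τ - m * τ * y)))
      (1 + ((γ * (1 - Ex) + γ * x * (m * τ * Ex)) * (d + m * x * Ex)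
        - γ * x * (1 - Ex) * (m * Ex + m * x * (-(m * τ) * Ex))) / (d + m * x * Ex) ^ 2) x :=
    (hasDerivAt_id x).add hQ
  rw [hH.deriv]
  have hnum : (γ * (1 - Ex) + γ * x * (m * τ * Ex)) * (d + m * x * Ex)
      - γ * x * (1 - Ex) * (m * Ex + m * x * (-(m * τ) * Ex))
      = γ * (d * (1 - Ex) + d * (m * τ) * x * Ex + (m * τ) * m * x ^ 2 * Ex) := by
    ring
  have hnn : 0 ≤ ((γ * (1 - Ex) + γ * x * (m * τ * Ex)) * (d + m * x * Ex)
      - γ * x * (1 - Ex) * (m * Ex + m * x * (-(m * τ) * Ex))) / (d + m * x * Ex) ^ 2 := by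
    apply div_nonneg
    · rw [hnum]
      have h1 : 0 ≤ 1 - Ex := by linarith
      have : 0 ≤ d * (1 - Ex) + d * (m * τ) * x * Ex + (m * τ) * m * x ^ 2 * Ex := by
        have := hEpos.le
        positivity
      positivity
    · positivity
  linarith

theorem endemic_equilibrium_exists_unique
    (β γ d ν τ : ℝ) (hβ : 0 < β) (hγ : 0 < γ) (hd : 0 < d) (hν : 0 ≤ ν) (hτ : 0 < τ)
    (hR0 : β / (γ + d) > 1) :
    ∃! I : ℝ, I ∈ Set.Ioo 0 (1 - (γ + d) / β) ∧
      d * (1 - (γ + d) / β) - β * I * ((γ + d) / β)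
        + (γ + ν * β * (1 - (γ + d) / β - I)) * I
          * Real.exp (-d * τ - ν * β * τ * I) = 0 := by
  have hγd : 0 < γ + d := by linarith
  have hβγd : γ + d < β := by
    rw [gt_iff_lt, lt_div_iff₀ hγd] at hR0
    linarith
  set T : ℝ := 1 - (γ + d) / β with hT_def
  have hT : 0 < T := by
    rw [hT_def]
    have : (γ + d) / β < 1 := (div_lt_one hβ).mpr hβγd
    linarith
  set h : ℝ → ℝ := fun x => x + γ * x * (1 - Real.exp (-d * τ - ν * β * τ * x)) /
      (d + ν * β * x * Real.exp (-d * τ - ν * β * τ * x)) with hh_def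
  have hmν : 0 ≤ ν * β := mul_nonneg hν hβ.le
  have hmono : StrictMonoOn h (Set.Ici 0) := mono_aux γ d (ν * β) τ hγ hd hmν hτ
  have hPpos : ∀ x : ℝ, 0 ≤ x → 0 < d + ν * β * x * Real.exp (-d * τ - ν * β * τ * x) := by
    intro x hx
    have h1 : 0 ≤ ν * β * x * Real.exp (-d * τ - ν * β * τ * x) :=
      mul_nonneg (mul_nonneg hmν hx) (Real.exp_pos _).le
    linarith
  -- key equivalence
  have key : ∀ I : ℝ, 0 ≤ I →
      (d * (1 - (γ + d) / β) - β * I * ((γ + d) / β)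
        + (γ + ν * β * (1 - (γ + d) / β - I)) * I
          * Real.exp (-d * τ - ν * β * τ * I) = 0 ↔ h I = T) := by
    intro I hI
    set E : ℝ := Real.exp (-d * τ - ν * β * τ * I) with hE_def
    have hP : 0 < d + ν * β * I * E := hPpos I hI
    have hβ' : β ≠ 0 := hβ.ne'
    have hid : d * (1 - (γ + d) / β) - β * I * ((γ + d) / β)
        + (γ + ν * β * (1 - (γ + d) / β - I)) * I * E
        = (1 - (γ + d) / β - I) * (d + ν * β * I * E) - γ * I * (1 - E) := by
      field_simp
      ring
    rw [hid]
    have hheq : h I = I + γ * I * (1 - E) / (d + ν * β * I * E) := rfl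
    rw [hheq]
    constructor
    · intro heq
      have : γ * I * (1 - E) = (1 - (γ + d) / β - I) * (d + ν * β * I * E) := by linarith
      rw [this, hT_def]
      rw [mul_div_cancel_right₀ _ hP.ne']
      ring
    · intro heq
      have h2 : γ * I * (1 - E) / (d + ν * β * I * E) = T - I := by linarith
      have h3 : γ * I * (1 - E) = (T - I) * (d + ν * β * I * E) := by
        rw [← h2, div_mul_cancel₀ _ hP.ne']
      rw [hT_def] at h3
      have : (1 - (γ + d) / β - I) * (d + ν * β * I * E) = γ * I * (1 - E) := by
        rw [h3]
      linarith
  -- existence via IVT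
  have hcont : ContinuousOn h (Set.Icc 0 T) := by
    apply (ContinuousOn.add continuousOn_id (ContinuousOn.div (by fun_prop) (by fun_prop)
      ?_)).mono Set.Icc_subset_Ici_self
    intro x hx
    exact (hPpos x hx).ne'
  have h0 : h 0 = 0 := by simp [hh_def]
  have hhT : T < h T := by
    have hE1 : Real.exp (-d * τ - ν * β * τ * T) < 1 := by
      apply Real.exp_lt_one_iff.mpr
      have : 0 ≤ ν * β * τ * T := mul_nonneg (mul_nonneg hmν hτ.le) hT.le
      nlinarith
    have hfrac : 0 < γ * T * (1 - Real.exp (-d * τ - ν * β * τ * T)) /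
        (d + ν * β * T * Real.exp (-d * τ - ν * β * τ * T)) := by
      apply div_pos
      · apply mul_pos (mul_pos hγ hT)
        linarith
      · exact hPpos T hT.le
    have heq : h T = T + γ * T * (1 - Real.exp (-d * τ - ν * β * τ * T)) /
        (d + ν * β * T * Real.exp (-d * τ - ν * β * τ * T)) := rfl
    rw [heq]
    linarith
  have hmem : T ∈ Set.Icc (h 0) (h T) := by
    rw [h0]
    exact ⟨hT.le, hhT.le⟩
  obtain ⟨I, hIcc, hhI⟩ := intermediate_value_Icc hT.le hcont hmem
  have hI0 : 0 < I := by
    rcases lt_or_eq_of_le hIcc.1 with h' | h'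
    · exact h'
    · exfalso; rw [← h'] at hhI; rw [h0] at hhI; linarith
  have hIT : I < T := by
    rcases lt_or_eq_of_le hIcc.2 with h' | h'
    · exact h'
    · exfalso; rw [h'] at hhI; linarith
  refine ⟨I, ⟨⟨hI0, hIT⟩, (key I hI0.le).mpr hhI⟩, ?_⟩
  rintro J ⟨⟨hJ0, hJT⟩, hJeq⟩
  have hJh : h J = T := (key J hJ0.le).mp hJeq
  exact hmono.injOn (Set.mem_Ici.mpr hJ0.le) (Set.mem_Ici.mpr hI0.le) (by rw [hJh, hhI])
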